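/- Let b ∈ C. Then the entries of Π_{Δ_τ}(b) are nonincreasing; that is, for all 1 ≤ i < j ≤ n, (Π_{Δ_τ}(b))_i ≥ (Π_{Δ_τ}(b))_j. Consequently (combining with nonnegativity of the entries), Π_{Δ_τ}(b) ∈ C. -/

import Mathlib

open Matrix

/-- The vector of absolute values of the entries of `x`, arranged in nonincreasing order. -/
noncomputable def absDesc {n : ℕ} (x : Fin n → ℝ) : Fin n → ℝ :=
  fun i => |x ((Tuple.sort fun j => |x j|) i.rev)|

/-- The ordered weighted ℓ1 (OWL1) norm `κ_λ(x) = ∑ i, λ_i |x|ᵢ↓`. -/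
noncomputable def kappa {n : ℕ} (lam x : Fin n → ℝ) : ℝ :=
  ∑ i, lam i * absDesc x i

/-- The monotone nonnegative cone `C = {x : x₁ ≥ x₂ ≥ … ≥ xₙ ≥ 0}`. -/
def coneC (n : ℕ) : Set (Fin n → ℝ) :=
  {x | (∀ i j : Fin n, i ≤ j → x j ≤ x i) ∧ ∀ i, 0 ≤ x i}

/-- `P` is a signed permutation matrix. -/
def IsSignedPerm {n : ℕ} (P : Matrix (Fin n) (Fin n) ℝ) : Prop :=
  ∃ σ : Equiv.Perm (Fin n), ∃ ε : Fin n → ℝ,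
    (∀ i, ε i = 1 ∨ ε i = -1) ∧ ∀ i j, P i j = if j = σ i then ε i else 0

/-- `p` minimizes `½‖x − b‖²` over `S`. -/
def IsMinimizer {n : ℕ} (S : Set (Fin n → ℝ)) (b p : Fin n → ℝ) : Prop :=
  p ∈ S ∧ ∀ x ∈ S, (1/2) * ∑ i, (p i - b i)^2 ≤ (1/2) * ∑ i, (x i - b i)^2

/-! ### Auxiliary lemmas about `kappa` -/

lemma absDesc_antitone {n : ℕ} (x : Fin n → ℝ) : Antitone (absDesc x) := by
  intro i j hij
  have hm := Tuple.monotone_sort (fun k => |x k|)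
  have : j.rev ≤ i.rev := Fin.rev_le_rev.mpr hij
  exact hm this

/-- Rearrangement bound: any signed/permuted pairing with `lam` is at most `kappa`. -/
lemma sum_abs_comp_le {n : ℕ} (lam : Fin n → ℝ)
    (hmono : ∀ i j : Fin n, i ≤ j → lam j ≤ lam i)
    (x : Fin n → ℝ) (ρ : Equiv.Perm (Fin n)) :
    ∑ i, lam i * |x (ρ i)| ≤ kappa lam x := by
  set g : Fin n → ℝ := fun k => |x k| with hg
  set s : Equiv.Perm (Fin n) := Tuple.sort g with hs
  have hd : ∀ i, absDesc x i = g (s i.rev) := fun i => rfl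
  set σ : Equiv.Perm (Fin n) := (ρ.trans s.symm).trans Fin.revPerm with hσ
  have key : ∀ i, |x (ρ i)| = absDesc x (σ i) := by
    intro i
    have : (σ i).rev = s.symm (ρ i) := by
      simp [hσ, Equiv.trans_apply, Fin.revPerm, Fin.rev_rev]
    rw [hd, this, Equiv.apply_symm_apply]
  have hmv : Monovary lam (absDesc x) := by
    intro i j h
    rcases le_total i j with h1 | h1
    · exact absurd h (not_lt.mpr (absDesc_antitone x h1))
    · exact hmono j i h1
  have hre := hmv.sum_smul_comp_perm_le_sum_smul (σ := σ)
  simp only [smul_eq_mul] at hre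
  calc ∑ i, lam i * |x (ρ i)| = ∑ i, lam i * absDesc x (σ i) := by
        exact Finset.sum_congr rfl fun i _ => by rw [key]
    _ ≤ ∑ i, lam i * absDesc x i := hre
    _ = kappa lam x := rfl

/-- `kappa` only depends on the absolute values of the entries. -/
lemma kappa_congr_abs {n : ℕ} (lam x y : Fin n → ℝ) (h : ∀ k, |y k| = |x k|) :
    kappa lam y = kappa lam x := by
  have h' : (fun k => |y k|) = fun k => |x k| := funext h
  unfold kappa absDesc
  refine Finset.sum_congr rfl fun i _ => ?_
  congr 1
  show (fun k => |y k|) ((Tuple.sort fun j => |y j|) i.rev)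
      = (fun k => |x k|) ((Tuple.sort fun j => |x j|) i.rev)
  rw [h']

/-- `kappa` is invariant under permutation of the entries. -/
lemma kappa_comp_perm {n : ℕ} (lam x : Fin n → ℝ) (σ : Equiv.Perm (Fin n)) :
    kappa lam (x ∘ σ) = kappa lam x := by
  have h := Tuple.comp_perm_comp_sort_eq_comp_sort (f := fun k => |x k|) (σ := σ)
  unfold kappa absDesc
  refine Finset.sum_congr rfl fun i _ => ?_
  congr 1
  have := congrFun h i.rev
  simpa [Function.comp_def] using this

/-- Averaging inequality for `kappa` (a special case of convexity). -/
lemma kappa_avg_le {n : ℕ} (lam : Fin n → ℝ)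
    (hmono : ∀ i j : Fin n, i ≤ j → lam j ≤ lam i)
    (hnonneg : ∀ i, 0 ≤ lam i) (x y : Fin n → ℝ) :
    kappa lam (fun k => (x k + y k) / 2) ≤ (kappa lam x + kappa lam y) / 2 := by
  set m : Fin n → ℝ := fun k => (x k + y k) / 2 with hm
  set ρ : Equiv.Perm (Fin n) := Fin.revPerm.trans (Tuple.sort fun k => |m k|) with hρ
  have h1 : kappa lam m = ∑ i, lam i * |m (ρ i)| := rfl
  have h2 : ∀ i : Fin n, lam i * |m (ρ i)| ≤
      lam i * ((|x (ρ i)| + |y (ρ i)|) / 2) := by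
    intro i
    refine mul_le_mul_of_nonneg_left ?_ (hnonneg i)
    have : |m (ρ i)| ≤ (|x (ρ i)| + |y (ρ i)|) / 2 := by
      have := abs_add_le (x (ρ i)) (y (ρ i))
      rw [hm]
      rw [abs_div]
      simp only [abs_two]
      linarith [abs_add_le (x (ρ i)) (y (ρ i))]
    exact this
  calc kappa lam m = ∑ i, lam i * |m (ρ i)| := h1
    _ ≤ ∑ i, lam i * ((|x (ρ i)| + |y (ρ i)|) / 2) := Finset.sum_le_sum fun i _ => h2 i
    _ = (∑ i, lam i * |x (ρ i)| + ∑ i, lam i * |y (ρ i)|) / 2 := by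
        rw [← Finset.sum_add_distrib, Finset.sum_div]
        exact Finset.sum_congr rfl fun i _ => by ring
    _ ≤ (kappa lam x + kappa lam y) / 2 := by
        have hx := sum_abs_comp_le lam hmono x ρ
        have hy := sum_abs_comp_le lam hmono y ρ
        linarith

/-- Sums that agree off `{i, j}` differ by the two local terms. -/
lemma sum_diff_pair {n : ℕ} {i j : Fin n} (hij : i ≠ j) (u v : Fin n → ℝ)
    (h : ∀ k, k ≠ i → k ≠ j → u k = v k) :
    ∑ k, u k - ∑ k, v k = (u i - v i) + (u j - v j) := by
  have hsub : ∑ k, (u k - v k) = ∑ k ∈ ({i, j} : Finset (Fin n)), (u k - v k) := by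
    refine (Finset.sum_subset (Finset.subset_univ _) ?_).symm
    intro k _ hk
    simp only [Finset.mem_insert, Finset.mem_singleton, not_or] at hk
    rw [h k hk.1 hk.2]; ring
  rw [← Finset.sum_sub_distrib, hsub, Finset.sum_pair hij]

/-- Sums that agree off `{i}` differ by the local term. -/
lemma sum_diff_single {n : ℕ} (i : Fin n) (u v : Fin n → ℝ)
    (h : ∀ k, k ≠ i → u k = v k) :
    ∑ k, u k - ∑ k, v k = u i - v i := by
  have hsub : ∑ k, (u k - v k) = ∑ k ∈ ({i} : Finset (Fin n)), (u k - v k) := by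
    refine (Finset.sum_subset (Finset.subset_univ _) ?_).symm
    intro k _ hk
    simp only [Finset.mem_singleton] at hk
    rw [h k hk]; ring
  rw [← Finset.sum_sub_distrib, hsub, Finset.sum_singleton]

/-- for `b ∈ C`, the entries of `Π_{Δ_τ}(b)` are nonincreasing, and
consequently (combining with nonnegativity of the entries) `Π_{Δ_τ}(b) ∈ C`. -/
theorem stmt5 {n : ℕ} (hn : 0 < n) (lam : Fin n → ℝ)
    (hmono : ∀ i j : Fin n, i ≤ j → lam j ≤ lam i)
    (hnonneg : ∀ i, 0 ≤ lam i) (hlam : lam ≠ 0)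
    (τ : ℝ) (hτ : 0 < τ)
    (b : Fin n → ℝ) (hbC : b ∈ coneC n)
    (p : Fin n → ℝ) (hp : IsMinimizer {x | kappa lam x ≤ τ} b p) :
    (∀ i j : Fin n, i < j → p j ≤ p i) ∧ p ∈ coneC n := by
  obtain ⟨hpS, hmin⟩ := hp
  obtain ⟨hbmono, hbnn⟩ := hbC
  -- nonnegativity of the entries of p
  have key2 : ∀ i, 0 ≤ p i := by
    intro i
    by_contra hneg
    push_neg at hneg
    set p' : Fin n → ℝ := fun k => if k = i then -p k else p k with hp'
    have habs : ∀ k, |p' k| = |p k| := by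
      intro k; by_cases h : k = i <;> simp [hp', h, abs_neg]
    have hkeq : kappa lam p' = kappa lam p := kappa_congr_abs lam p p' habs
    have hfeas' : p' ∈ {x | kappa lam x ≤ τ} := by
      simpa [Set.mem_setOf_eq, hkeq] using hpS
    have h1 := hmin p' hfeas'
    have hsum1 : ∑ k, (p k - b k)^2 ≤ ∑ k, (p' k - b k)^2 := by linarith
    have hdiff : ∑ k, (p' k - b k)^2 - ∑ k, (p k - b k)^2 =
        (p' i - b i)^2 - (p i - b i)^2 :=
      sum_diff_single i _ _ (by intro k hk; simp [hp', hk])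
    have hpi' : p' i = -p i := by simp [hp']
    have hb0 : b i = 0 := by
      have h2 : 0 ≤ (p' i - b i)^2 - (p i - b i)^2 := by linarith
      rw [hpi'] at h2
      nlinarith [hbnn i]
    -- midpoint contradiction
    set m : Fin n → ℝ := fun k => (p k + p' k) / 2 with hmdef
    have hmf : m ∈ {x | kappa lam x ≤ τ} := by
      have := kappa_avg_le lam hmono hnonneg p p'
      rw [hkeq] at this
      simp only [Set.mem_setOf_eq] at hpS ⊢
      calc kappa lam m ≤ (kappa lam p + kappa lam p) / 2 := this
        _ = kappa lam p := by ring
        _ ≤ τ := hpS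
    have h3 := hmin m hmf
    have hdiff2 : ∑ k, (m k - b k)^2 - ∑ k, (p k - b k)^2 =
        (m i - b i)^2 - (p i - b i)^2 := by
      refine sum_diff_single i _ _ ?_
      intro k hk
      have : m k = p k := by simp [hmdef, hp', hk]
      rw [this]
    have hmi : m i = 0 := by simp [hmdef, hpi']
    nlinarith [h3, hdiff2, hmi, hb0, sq_nonneg (p i)]
  -- monotonicity of the entries of p
  have key1 : ∀ i j : Fin n, i < j → p j ≤ p i := by
    intro i j hij
    by_contra hlt
    push_neg at hlt
    have hne : i ≠ j := ne_of_lt hij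
    set p' : Fin n → ℝ := p ∘ Equiv.swap i j with hp'
    have hkeq : kappa lam p' = kappa lam p := kappa_comp_perm lam p _
    have hfeas' : p' ∈ {x | kappa lam x ≤ τ} := by
      simpa [Set.mem_setOf_eq, hkeq] using hpS
    have hpi' : p' i = p j := by simp [hp', Equiv.swap_apply_left]
    have hpj' : p' j = p i := by simp [hp', Equiv.swap_apply_right]
    have h1 := hmin p' hfeas'
    have hdiff : ∑ k, (p' k - b k)^2 - ∑ k, (p k - b k)^2 =
        ((p' i - b i)^2 - (p i - b i)^2) + ((p' j - b j)^2 - (p j - b j)^2) := by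
      refine sum_diff_pair hne _ _ ?_
      intro k hk1 hk2
      simp [hp', Equiv.swap_apply_of_ne_of_ne hk1 hk2]
    rw [hpi', hpj'] at hdiff
    have hbij : b j ≤ b i := hbmono i j (le_of_lt hij)
    have hbeq : b i = b j := by nlinarith [h1, hdiff]
    -- midpoint contradiction
    set m : Fin n → ℝ := fun k => (p k + p' k) / 2 with hmdef
    have hmf : m ∈ {x | kappa lam x ≤ τ} := by
      have := kappa_avg_le lam hmono hnonneg p p'
      rw [hkeq] at this
      simp only [Set.mem_setOf_eq] at hpS ⊢
      calc kappa lam m ≤ (kappa lam p + kappa lam p) / 2 := this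
        _ = kappa lam p := by ring
        _ ≤ τ := hpS
    have h3 := hmin m hmf
    have hdiff2 : ∑ k, (m k - b k)^2 - ∑ k, (p k - b k)^2 =
        ((m i - b i)^2 - (p i - b i)^2) + ((m j - b j)^2 - (p j - b j)^2) := by
      refine sum_diff_pair hne _ _ ?_
      intro k hk1 hk2
      have : m k = p k := by
        simp [hmdef, hp', Equiv.swap_apply_of_ne_of_ne hk1 hk2]
      rw [this]
    have hmi : m i = (p i + p j) / 2 := by simp [hmdef, hpi']
    have hmj : m j = (p i + p j) / 2 := by simp [hmdef, hpj']; ring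
    rw [hmi, hmj, hbeq] at hdiff2
    nlinarith [h3, hdiff2, sq_nonneg (p i - p j)]
  exact ⟨key1, fun i j hij => hij.lt_or_eq.elim (fun h => key1 i j h)
    (fun h => le_of_eq (by rw [h])), key2⟩
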